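/- As formal power series, (1 - q)(1 - q^3)(1 - q^5)\cdots \cdot (1+q^2)(1+q^6)(1+q^{10})\cdots = \sum_{n=0}^{\infty} (-1)^n Q_0(n) q^n; that is, (q;q^2)_\infty (-q^2;q^4)_\infty is the generating function of (-1)^n Q_0(n). -/

import Mathlib

open PowerSeries Finset

/-- `Q0 n`: number of partitions of `n` into distinct parts none divisible by 4. -/
noncomputable def Q0 (n : ℕ) : ℕ :=
  Nat.card {p : n.Partition // p.parts.Nodup ∧ ∀ x ∈ p.parts, ¬ (4 ∣ x)}

/-- Formal infinite product `∏_{k=0}^∞ f k` of power series, for families where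
`f k ≡ 1 (mod q^{k+1})` (as for all q-Pochhammer factors below): the coefficient of `q^n`
is then the (stable) coefficient of `q^n` in any partial product `∏_{k≤N} f k` with `N ≥ n`. -/
noncomputable def infProd (f : ℕ → PowerSeries ℤ) : PowerSeries ℤ :=
  PowerSeries.mk fun n => PowerSeries.coeff (R := ℤ) n (∏ k ∈ Finset.range (n + 1), f k)

lemma coeff_prod_aux (s : Finset ℕ) (c : ℕ → ℤ) (a : ℕ → ℕ) (n : ℕ) :
    coeff n (∏ k ∈ s, (1 + C (c k) * X ^ a k)) =
      ∑ t ∈ s.powerset.filter (fun t => ∑ k ∈ t, a k = n), ∏ k ∈ t, c k := by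
  have h1 : ∀ k ∈ s, (1 + C (c k) * X ^ a k) = (C (c k) * X ^ a k) + 1 :=
    fun k _ => by ring
  rw [Finset.prod_congr rfl h1, Finset.prod_add, map_sum, Finset.sum_filter]
  refine Finset.sum_congr rfl fun t ht => ?_
  rw [Finset.prod_const_one, mul_one, Finset.prod_mul_distrib, ← map_prod,
    Finset.prod_pow_eq_pow_sum, coeff_C_mul, coeff_X_pow]
  by_cases h : ∑ k ∈ t, a k = n
  · simp [h]
  · rw [if_neg (fun hh : n = ∑ i ∈ t, a i => h hh.symm), mul_zero, if_neg h]

lemma filter_powerset_eq (a : ℕ → ℕ) (ha : ∀ k, k < a k) {i n : ℕ} (h : i ≤ n) :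
    (Finset.range (i+1)).powerset.filter (fun t => ∑ k ∈ t, a k = i) =
    (Finset.range (n+1)).powerset.filter (fun t => ∑ k ∈ t, a k = i) := by
  ext t
  simp only [Finset.mem_filter, Finset.mem_powerset]
  constructor
  · rintro ⟨hsub, hsum⟩
    exact ⟨hsub.trans (Finset.range_subset_range.2 (by omega)), hsum⟩
  · rintro ⟨hsub, hsum⟩
    refine ⟨fun k hk => Finset.mem_range.2 ?_, hsum⟩
    have h1 : a k ≤ i := hsum ▸ Finset.single_le_sum (fun j _ => Nat.zero_le _) hk
    have := ha k
    omega

lemma coeff_infProd (c : ℕ → ℤ) (a : ℕ → ℕ) (ha : ∀ k, k < a k) {i n : ℕ} (h : i ≤ n) :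
    coeff i (infProd (fun k => 1 + C (c k) * X ^ a k)) =
      ∑ t ∈ (Finset.range (n+1)).powerset.filter (fun t => ∑ k ∈ t, a k = i),
        ∏ k ∈ t, c k := by
  rw [infProd, coeff_mk, coeff_prod_aux, filter_powerset_eq a ha h]

def Pn (n : ℕ) : Finset (Finset ℕ × Finset ℕ) :=
  ((Finset.range (n+1)).powerset ×ˢ (Finset.range (n+1)).powerset).filter
    (fun st => (∑ k ∈ st.1, (2*k+1)) + (∑ k ∈ st.2, (4*k+2)) = n)

lemma coeff_lhs (n : ℕ) :
    coeff n (infProd (fun k => 1 - (X : PowerSeries ℤ) ^ (2 * k + 1)) *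
        infProd (fun k => 1 + (X : PowerSeries ℤ) ^ (4 * k + 2))) =
      (-1 : ℤ) ^ n * (Pn n).card := by
  have hF : (fun k => 1 - (X : PowerSeries ℤ) ^ (2 * k + 1)) =
      fun k => 1 + C ((fun _ => (-1 : ℤ)) k) * X ^ (2 * k + 1) := by
    funext k; simp; ring
  have hG : (fun k => 1 + (X : PowerSeries ℤ) ^ (4 * k + 2)) =
      fun k => 1 + C ((fun _ => (1 : ℤ)) k) * X ^ (4 * k + 2) := by
    funext k; simp
  rw [hF, hG, coeff_mul]
  set A : ℕ → Finset (Finset ℕ) := fun i =>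
    (Finset.range (n+1)).powerset.filter (fun t => ∑ k ∈ t, (2*k+1) = i) with hA
  set B : ℕ → Finset (Finset ℕ) := fun j =>
    (Finset.range (n+1)).powerset.filter (fun t => ∑ k ∈ t, (4*k+2) = j) with hB
  have step : ∀ ij ∈ HasAntidiagonal.antidiagonal n,
      coeff ij.1 (infProd (fun k => 1 + C (-1) * X ^ (2 * k + 1))) *
      coeff ij.2 (infProd (fun k => 1 + C 1 * X ^ (4 * k + 2))) =
      (-1 : ℤ) ^ n * ((A ij.1).card * (B ij.2).card) := by
    rintro ⟨i, j⟩ hij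
    rw [HasAntidiagonal.mem_antidiagonal] at hij
    rw [coeff_infProd (fun _ => (-1:ℤ)) (fun k => 2*k+1) (fun k => by show k < 2*k+1; omega) (by omega : i ≤ n),
        coeff_infProd (fun _ => (1:ℤ)) (fun k => 4*k+2) (fun k => by show k < 4*k+2; omega) (by omega : j ≤ n)]
    simp only []
    have hAi : ∑ t ∈ A i, ∏ _k ∈ t, (-1 : ℤ) = (-1)^i * (A i).card := by
      rw [Finset.sum_congr rfl (fun t ht => ?_), Finset.sum_const, nsmul_eq_mul, mul_comm]
      have hsum : ∑ k ∈ t, (2*k+1) = i := (Finset.mem_filter.1 ht).2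
      calc ∏ _k ∈ t, (-1 : ℤ) = ∏ k ∈ t, (-1 : ℤ)^(2*k+1) :=
            Finset.prod_congr rfl (fun k _ => (Odd.neg_one_pow ⟨k, by ring⟩).symm)
        _ = (-1 : ℤ)^(∑ k ∈ t, (2*k+1)) := Finset.prod_pow_eq_pow_sum _ _ _
        _ = (-1 : ℤ)^i := by rw [hsum]
    have hBj : ∑ t ∈ B j, ∏ _k ∈ t, (1 : ℤ) = (B j).card := by
      simp
    rw [hAi, hBj]
    by_cases hBe : (B j) = ∅
    · simp [hBe]
    · obtain ⟨t, ht⟩ := Finset.nonempty_iff_ne_empty.2 hBe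
      have hsum : ∑ k ∈ t, (4*k+2) = j := (Finset.mem_filter.1 ht).2
      have hj : Even j := by
        rw [← hsum]
        exact Finset.even_sum _ (fun k _ => ⟨2*k+1, by ring⟩)
      have hin : (-1 : ℤ)^i = (-1)^n := by
        rw [← hij, pow_add, Even.neg_one_pow hj, mul_one]
      rw [hin]; ring
  rw [Finset.sum_congr rfl step, ← Finset.mul_sum]
  congr 1
  -- (Pn n).card = ∑ ij, |A i| * |B j|
  have hbi : Pn n = (HasAntidiagonal.antidiagonal n).biUnion (fun ij => (A ij.1) ×ˢ (B ij.2)) := by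
    ext ⟨S, T⟩
    simp only [Pn, Finset.mem_filter, Finset.mem_product, Finset.mem_biUnion,
      HasAntidiagonal.mem_antidiagonal, Finset.mem_powerset, hA, hB, Prod.exists]
    constructor
    · rintro ⟨⟨h1, h2⟩, h3⟩
      exact ⟨_, _, h3, ⟨h1, rfl⟩, ⟨h2, rfl⟩⟩
    · rintro ⟨i, j, hij, ⟨h1, rfl⟩, ⟨h2, rfl⟩⟩
      exact ⟨⟨h1, h2⟩, hij⟩
  rw [hbi, Finset.card_biUnion, Nat.cast_sum]
  · refine Finset.sum_congr rfl fun ij _ => ?_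
    rw [Finset.card_product]
    push_cast
    ring
  · rintro ⟨i, j⟩ hij ⟨i', j'⟩ hij' hne
    simp only [Finset.disjoint_left, Finset.mem_product, hA, hB, Finset.mem_filter]
    rintro ⟨S, T⟩ ⟨⟨_, h1⟩, ⟨_, h2⟩⟩ ⟨⟨_, h3⟩, ⟨_, h4⟩⟩
    exact hne (by rw [Prod.ext_iff]; omega)

lemma card_Pn (n : ℕ) : ((Pn n).card : ℤ) = Q0 n := by
  have h1 : (Pn n).card = Nat.card {st // st ∈ Pn n} := by
    rw [Nat.card_eq_fintype_card, Fintype.card_coe]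
  rw [h1, Q0]
  norm_cast
  refine Nat.card_eq_of_bijective (fun st => ?_) ⟨?_, ?_⟩
  · refine ⟨⟨Multiset.map (fun k => 2*k+1) st.1.1.val + Multiset.map (fun k => 4*k+2) st.1.2.val,
      ?_, ?_⟩, ?_, ?_⟩
    · intro m hm
      rcases Multiset.mem_add.1 hm with h | h <;>
        · obtain ⟨k, _, rfl⟩ := Multiset.mem_map.1 h; omega
    · have h := (Finset.mem_filter.1 st.2).2
      rw [Multiset.sum_add]
      exact h
    · refine Multiset.nodup_add.2 ⟨?_, ?_, ?_⟩
      · exact st.1.1.nodup.map (fun a b => by omega)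
      · exact st.1.2.nodup.map (fun a b => by omega)
      · rw [Multiset.disjoint_left]
        intro m h1 h2
        obtain ⟨k, _, rfl⟩ := Multiset.mem_map.1 h1
        obtain ⟨j, _, hj⟩ := Multiset.mem_map.1 h2
        omega
    · intro m hm
      rcases Multiset.mem_add.1 hm with h | h <;>
        · obtain ⟨k, _, rfl⟩ := Multiset.mem_map.1 h; omega
  · -- injective
    rintro ⟨⟨S, T⟩, hST⟩ ⟨⟨S', T'⟩, hST'⟩ h
    have hp : Multiset.map (fun k => 2*k+1) S.val + Multiset.map (fun k => 4*k+2) T.val =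
        Multiset.map (fun k => 2*k+1) S'.val + Multiset.map (fun k => 4*k+2) T'.val := by
      have := congrArg (fun x => (x.1 : Nat.Partition _).parts) h
      simpa using this
    have hfil : ∀ (S T : Finset ℕ),
        Multiset.filter (fun m => m % 2 = 1)
          (Multiset.map (fun k => 2*k+1) S.val + Multiset.map (fun k => 4*k+2) T.val) =
        Multiset.map (fun k => 2*k+1) S.val := by
      intro S T
      rw [Multiset.filter_add, Multiset.filter_eq_self.2, Multiset.filter_eq_nil.2, add_zero]
      · intro m hm; obtain ⟨k, _, rfl⟩ := Multiset.mem_map.1 hm; omega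
      · intro m hm; obtain ⟨k, _, rfl⟩ := Multiset.mem_map.1 hm; omega
    have hS : S = S' := by
      have := (hfil S T).symm.trans ((congrArg _ hp).trans (hfil S' T'))
      exact Finset.val_injective (Multiset.map_injective (fun a b => by omega) this)
    subst hS
    have hT : T = T' := by
      have := add_left_cancel hp
      exact Finset.val_injective (Multiset.map_injective (fun a b => by omega) this)
    subst hT; rfl
  · -- surjective
    rintro ⟨p, hnd, h4⟩
    have hle : ∀ m ∈ p.parts, m ≤ n := fun m hm =>
      p.parts_sum ▸ Multiset.le_sum_of_mem hm
    have hodd : ∀ m ∈ p.parts.filter (fun m => m % 2 = 1), 2*(m/2)+1 = m := by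
      intro m hm; have := (Multiset.mem_filter.1 hm).2; omega
    have heven : ∀ m ∈ p.parts.filter (fun m => m % 2 = 0), 4*(m/4)+2 = m := by
      intro m hm
      have h1 := (Multiset.mem_filter.1 hm).2
      have h2 := h4 m (Multiset.mem_filter.1 hm).1
      omega
    have e1 : Multiset.map ((fun k => 2*k+1) ∘ (·/2)) (p.parts.filter (fun m => m % 2 = 1)) =
        p.parts.filter (fun m => m % 2 = 1) :=
      (Multiset.map_congr rfl hodd).trans (Multiset.map_id' _)
    have e2 : Multiset.map ((fun k => 4*k+2) ∘ (·/4)) (p.parts.filter (fun m => m % 2 = 0)) =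
        p.parts.filter (fun m => m % 2 = 0) :=
      (Multiset.map_congr rfl heven).trans (Multiset.map_id' _)
    have efil : p.parts.filter (fun m => m % 2 = 0) =
        p.parts.filter (fun m => ¬ m % 2 = 1) :=
      Multiset.filter_congr (fun m _ => by omega)
    refine ⟨⟨(⟨Multiset.map (·/2) (p.parts.filter (fun m => m % 2 = 1)), ?_⟩,
             ⟨Multiset.map (·/4) (p.parts.filter (fun m => m % 2 = 0)), ?_⟩), ?_⟩, ?_⟩
    · refine Multiset.Nodup.map_on ?_ (hnd.filter _)
      intro a ha b hb hab
      have h1 := (Multiset.mem_filter.1 ha).2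
      have h2 := (Multiset.mem_filter.1 hb).2
      omega
    · refine Multiset.Nodup.map_on ?_ (hnd.filter _)
      intro a ha b hb hab
      have h1 := heven a ha
      have h2 := heven b hb
      omega
    · rw [Pn, Finset.mem_filter]
      constructor
      · rw [Finset.mem_product]
        constructor <;>
        · rw [Finset.mem_powerset]
          intro k hk
          rw [Finset.mem_range]
          obtain ⟨m, hm, rfl⟩ := Multiset.mem_map.1 hk
          have := hle m (Multiset.mem_filter.1 hm).1
          omega
      · show (Multiset.map _ (Multiset.map _ _)).sum + (Multiset.map _ (Multiset.map _ _)).sum = n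
        rw [Multiset.map_map, Multiset.map_map, e1, e2, efil]
        rw [← Multiset.sum_add, Multiset.filter_add_not, p.parts_sum]
    · -- maps to p
      apply Subtype.ext
      apply Nat.Partition.ext
      show Multiset.map (fun k => 2*k+1) (Multiset.map (·/2) _) +
           Multiset.map (fun k => 4*k+2) (Multiset.map (·/4) _) = p.parts
      rw [Multiset.map_map, Multiset.map_map, e1, e2, efil]
      exact Multiset.filter_add_not _ _

/-- `(q;q²)_∞ (-q²;q⁴)_∞ = ∑ (-1)^n Q₀(n) qⁿ`. -/
theorem stmt_8 :
    infProd (fun k => 1 - (PowerSeries.X : PowerSeries ℤ) ^ (2 * k + 1)) *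
        infProd (fun k => 1 + (PowerSeries.X : PowerSeries ℤ) ^ (4 * k + 2)) =
      PowerSeries.mk (fun n => (-1 : ℤ) ^ n * Q0 n) := by
  ext n
  rw [coeff_mk, coeff_lhs, card_Pn]
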